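/- Let F_3 be the free group on a, b, c and F_2 the free group on x, y, and let φ, ψ : F_3 → F_2 be the homomorphisms determined by φ(a) = x, φ(b) = y, φ(c) = [x,y] and ψ(a) = x, ψ(b) = y, ψ(c) = 1, where [x,y] = xyx^{-1}y^{-1}. Fix n ≥ 1. If w is any word in the letters {a, b, c}^{±1} such that φ(w) = [x^n, y^n] in F_2 and ψ(w) = 1 in F_2, then the number of occurrences of the letters c and c^{-1} in w is at least n². -/

import Mathlib

open scoped commutatorElement

/-- The generator `x` of the free group `F_2 = F(x, y)`. -/
def xgen : FreeGroup (Fin 2) := FreeGroup.of 0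
/-- The generator `y` of the free group `F_2 = F(x, y)`. -/
def ygen : FreeGroup (Fin 2) := FreeGroup.of 1

/-- The homomorphism `φ : F(a,b,c) → F(x,y)` with `φ(a) = x`, `φ(b) = y`,
`φ(c) = [x,y]`. -/
def phiHom : FreeGroup (Fin 3) →* FreeGroup (Fin 2) :=
  FreeGroup.lift (fun i => if i = 0 then xgen else if i = 1 then ygen else ⁅xgen, ygen⁆)

/-- The homomorphism `ψ : F(a,b,c) → F(x,y)` with `ψ(a) = x`, `ψ(b) = y`, `ψ(c) = 1`. -/
def psiHom : FreeGroup (Fin 3) →* FreeGroup (Fin 2) :=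
  FreeGroup.lift (fun i => if i = 0 then xgen else if i = 1 then ygen else 1)

/-- The integral Heisenberg group, as triples of integers. -/
@[ext] structure Heis where
  a : ℤ
  b : ℤ
  c : ℤ

namespace Heis

instance : Mul Heis := ⟨fun p q => ⟨p.a + q.a, p.b + q.b, p.c + q.c + p.a * q.b⟩⟩
instance : One Heis := ⟨⟨0, 0, 0⟩⟩
instance : Inv Heis := ⟨fun p => ⟨-p.a, -p.b, -p.c + p.a * p.b⟩⟩

lemma mul_def (p q : Heis) : p * q = ⟨p.a + q.a, p.b + q.b, p.c + q.c + p.a * q.b⟩ := rfl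
lemma one_def : (1 : Heis) = ⟨0, 0, 0⟩ := rfl
lemma inv_def (p : Heis) : p⁻¹ = ⟨-p.a, -p.b, -p.c + p.a * p.b⟩ := rfl

instance : Group Heis where
  mul_assoc p q r := by ext <;> simp [mul_def] <;> ring
  one_mul p := by ext <;> simp [mul_def, one_def]
  mul_one p := by ext <;> simp [mul_def, one_def]
  inv_mul_cancel p := by ext <;> simp [mul_def, inv_def, one_def] <;> ring

/-- The central element `z^k`. -/
def Z (k : ℤ) : Heis := ⟨0, 0, k⟩

lemma Z_comm (g : Heis) (k : ℤ) : g * Z k = Z k * g := by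
  ext <;> simp [mul_def, Z] <;> ring

lemma Z_mul_Z (s t : ℤ) : Z s * Z t = Z (s + t) := by
  ext <;> simp [mul_def, Z]

end Heis

/-- The homomorphism `F(x,y) → Heis` with `x ↦ (1,0,0)`, `y ↦ (0,1,0)`. -/
def heisHom : FreeGroup (Fin 2) →* Heis :=
  FreeGroup.lift (fun i => if i = 0 then ⟨1, 0, 0⟩ else ⟨0, 1, 0⟩)

lemma heisHom_x : heisHom xgen = ⟨1, 0, 0⟩ := by
  simp [heisHom, xgen, FreeGroup.lift_apply_of]

lemma heisHom_y : heisHom ygen = ⟨0, 1, 0⟩ := by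
  simp [heisHom, ygen, FreeGroup.lift_apply_of]

lemma X_pow (n : ℕ) : (⟨1, 0, 0⟩ : Heis) ^ n = ⟨(n : ℤ), 0, 0⟩ := by
  induction n with
  | zero => simp [Heis.one_def]
  | succ k ih =>
    rw [pow_succ, ih]
    ext <;> simp [Heis.mul_def]

lemma Y_pow (n : ℕ) : (⟨0, 1, 0⟩ : Heis) ^ n = ⟨0, (n : ℤ), 0⟩ := by
  induction n with
  | zero => simp [Heis.one_def]
  | succ k ih =>
    rw [pow_succ, ih]
    ext <;> simp [Heis.mul_def]

lemma heisHom_comm (n : ℕ) : heisHom ⁅xgen ^ n, ygen ^ n⁆ = Heis.Z ((n : ℤ) ^ 2) := by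
  rw [commutatorElement_def]
  simp only [map_mul, map_inv, map_pow, heisHom_x, heisHom_y, X_pow, Y_pow]
  ext <;> simp [Heis.mul_def, Heis.inv_def, Heis.Z] <;> ring

/-- The `c`-exponent value of a single letter. -/
def cval (p : Fin 3 × Bool) : ℤ := if p.1 = 2 then (if p.2 then 1 else -1) else 0

/-- The `c`-exponent sum of a word. -/
def csum (w : List (Fin 3 × Bool)) : ℤ := (w.map cval).sum

lemma letter_eq (p : Fin 3 × Bool) :
    heisHom (phiHom (FreeGroup.mk [p])) =
      heisHom (psiHom (FreeGroup.mk [p])) * Heis.Z (cval p) := by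
  obtain ⟨i, b⟩ := p
  fin_cases i <;> cases b <;>
    simp [phiHom, psiHom, FreeGroup.lift_mk, cval, xgen, ygen, FreeGroup.lift_apply_of,
      heisHom, commutatorElement_def] <;>
    ext <;> simp [Heis.mul_def, Heis.inv_def, Heis.one_def, Heis.Z]

lemma key (w : List (Fin 3 × Bool)) :
    heisHom (phiHom (FreeGroup.mk w)) =
      heisHom (psiHom (FreeGroup.mk w)) * Heis.Z (csum w) := by
  induction w with
  | nil =>
    have h : FreeGroup.mk ([] : List (Fin 3 × Bool)) = 1 := rfl
    simp [h, csum, Heis.Z, Heis.one_def, Heis.mul_def]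
  | cons p t ih =>
    have h : FreeGroup.mk (p :: t) = FreeGroup.mk [p] * FreeGroup.mk t := by
      rw [FreeGroup.mul_mk]; rfl
    rw [h, map_mul, map_mul, map_mul, map_mul, ih, letter_eq]
    have hcs : csum (p :: t) = cval p + csum t := by simp [csum]
    rw [hcs, ← Heis.Z_mul_Z, mul_assoc, mul_assoc, ← mul_assoc (Heis.Z (cval p)),
      ← Heis.Z_comm, mul_assoc]

lemma csum_le (w : List (Fin 3 × Bool)) :
    csum w ≤ (w.countP (fun p => decide (p.1 = 2)) : ℤ) := by
  induction w with
  | nil => simp [csum]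
  | cons p t ih =>
    have hcs : csum (p :: t) = cval p + csum t := by simp [csum]
    rw [hcs, List.countP_cons]
    by_cases h : p.1 = 2
    · have h1 : cval p ≤ 1 := by cases hb : p.2 <;> simp [cval, h, hb]
      have h2 : (decide (p.1 = 2)) = true := by simp [h]
      rw [h2]
      have h3 : (if true = true then (1:ℕ) else 0) = 1 := rfl
      rw [h3]
      push_cast
      omega
    · have h1 : cval p = 0 := by simp [cval, h]
      have h2 : (decide (p.1 = 2)) = false := by simp [h]
      rw [h2]
      have h3 : (if false = true then (1:ℕ) else 0) = 0 := rfl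
      rw [h3]
      push_cast
      omega

/-- Fix `n ≥ 1`.  If `w` is a word in the letters `{a, b, c}^{±1}` such that
`φ(w) = [x^n, y^n]` and `ψ(w) = 1` in `F_2`, then `w` contains at least `n²` occurrences
of the letters `c` and `c⁻¹`. -/
theorem count_c_ge_n_squared (n : ℕ) (hn : 1 ≤ n) (w : List (Fin 3 × Bool))
    (hphi : phiHom (FreeGroup.mk w) = ⁅xgen ^ n, ygen ^ n⁆)
    (hpsi : psiHom (FreeGroup.mk w) = 1) :
    n ^ 2 ≤ w.countP (fun p => decide (p.1 = 2)) := by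
  have h := key w
  rw [hphi, hpsi, map_one, one_mul, heisHom_comm] at h
  have hz : ((n : ℤ) ^ 2) = csum w := congrArg Heis.c h
  have := csum_le w
  have : ((n : ℤ) ^ 2) ≤ (w.countP (fun p => decide (p.1 = 2)) : ℤ) := hz ▸ this
  exact_mod_cast this
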